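/- If f is a budget-balanced distribution rule for a welfare function W = (𝒯, Q) (with W(∅) = 0) on a finite player set N that guarantees the existence of a pure Nash equilibrium in all games in G(N, f, W), then there exists a sequence of weight systems {ω^T}_{T∈𝒯} such that f = Σ_{T∈𝒯} q_T · f^T_{GWSV}[ω^T]. -/

import Mathlib

open scoped BigOperators Classical

namespace CostSharing

/-- A welfare sharing game on player set `N`: a finite resource set, a nonempty
finite action set (a collection of subsets of resources) for each player, and a
local welfare function at each resource. -/
structure Game (N : Type) [Fintype N] [DecidableEq N] where
  R : Type
  [finR : Fintype R]
  [decR : DecidableEq R]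
  act : N → Finset (Finset R)
  act_nonempty : ∀ i, (act i).Nonempty
  Wr : R → Finset N → ℝ

attribute [instance] Game.finR Game.decR

variable {N : Type} [Fintype N] [DecidableEq N]

/-- `{a}_r`: the set of players choosing resource `r` in profile `a`. -/
def playersAt {G : Game N} (a : N → Finset G.R) (r : G.R) : Finset N :=
  Finset.univ.filter fun i => r ∈ a i

/-- Player `i`'s utility, where `fD` assigns to each local welfare function its
local distribution rule (so resources with identical welfare functions have
identical distribution rules). -/
noncomputable def utility (G : Game N) (fD : (Finset N → ℝ) → N → Finset N → ℝ)
    (a : N → Finset G.R) (i : N) : ℝ :=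
  ∑ r ∈ a i, fD (G.Wr r) i (playersAt a r)

/-- Pure Nash equilibrium. -/
def IsPNE (G : Game N) (fD : (Finset N → ℝ) → N → Finset N → ℝ)
    (a : N → Finset G.R) : Prop :=
  (∀ i, a i ∈ G.act i) ∧
    ∀ i : N, ∀ b ∈ G.act i,
      utility G fD (Function.update a i b) i ≤ utility G fD a i

/-- Every game in the class `G(N, f^𝕎, 𝕎)` possesses a pure Nash equilibrium. -/
def GuaranteesPNE (𝕎 : Set (Finset N → ℝ))
    (fD : (Finset N → ℝ) → N → Finset N → ℝ) : Prop :=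
  ∀ G : Game N, (∀ r : G.R, G.Wr r ∈ 𝕎) → ∃ a, IsPNE G fD a

/-- Every game in the single-welfare-function class `G(N, f, W)` possesses a
pure Nash equilibrium. -/
def GuaranteesPNE1 (W : Finset N → ℝ) (f : N → Finset N → ℝ) : Prop :=
  ∀ G : Game N, (∀ r : G.R, G.Wr r = W) → ∃ a, IsPNE G (fun _ => f) a

/-- A distribution rule allocates nothing to absent players. -/
def DistRule (f : N → Finset N → ℝ) : Prop :=
  ∀ (i : N) (S : Finset N), i ∉ S → f i S = 0

/-- Budget balance: `∑_{i∈S} f(i,S) = W(S)`. -/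
def BudgetBalanced (W : Finset N → ℝ) (f : N → Finset N → ℝ) : Prop :=
  ∀ S : Finset N, ∑ i ∈ S, f i S = W S

/-- The inclusion (unanimity) welfare function `W^T`. -/
def unanimity (T S : Finset N) : ℝ := if T ⊆ S then 1 else 0

/-- The basis coefficient `q^W_T` of `W` on the unanimity basis (Möbius inversion). -/
def coeff (W : Finset N → ℝ) (T : Finset N) : ℝ :=
  ∑ R ∈ T.powerset, (-1 : ℝ) ^ (T.card - R.card) * W R

/-- The support `𝒯^W` of the basis representation of `W`. -/
noncomputable def supp (W : Finset N → ℝ) : Finset (Finset N) :=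
  Finset.univ.filter fun T => coeff W T ≠ 0

/-- `𝒯^W(S)`: the contributing coalitions within `S`. -/
noncomputable def suppIn (W : Finset N → ℝ) (S : Finset N) : Finset (Finset N) :=
  (supp W).filter (· ⊆ S)

/-- `N^W(S)`: the contributing players within `S`. -/
noncomputable def contributors (W : Finset N → ℝ) (S : Finset N) : Finset N :=
  (suppIn W S).biUnion id

/-- A weight system `ω = (λ, Σ)`: strictly positive player weights together with
an ordered partition of `N`. -/
structure WeightSystem (N : Type) [Fintype N] [DecidableEq N] where
  lam : N → ℝ
  lam_pos : ∀ i, 0 < lam i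
  m : ℕ
  part : Fin m → Finset N
  part_nonempty : ∀ k, (part k).Nonempty
  part_disjoint : ∀ k l, k ≠ l → Disjoint (part k) (part l)
  part_covers : ∀ i : N, ∃ k, i ∈ part k

/-- The index of the block of the ordered partition containing player `i`. -/
noncomputable def WeightSystem.idx (ω : WeightSystem N) (i : N) : Fin ω.m :=
  (ω.part_covers i).choose

/-- `T̄ = T ∩ S_k` where `k = min {j : S_j ∩ T ≠ ∅}`. -/
noncomputable def WeightSystem.bar (ω : WeightSystem N) (T : Finset N) : Finset N :=
  T.filter fun i => ∀ j ∈ T, ω.idx i ≤ ω.idx j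

/-- The generalized weighted Shapley value basis rule `f^T_{GWSV}[ω]`. -/
noncomputable def fGWSVbasis (ω : WeightSystem N) (T : Finset N) (i : N)
    (S : Finset N) : ℝ :=
  if i ∈ ω.bar T ∧ T ⊆ S then ω.lam i / ∑ j ∈ ω.bar T, ω.lam j else 0

/-- The generalized weighted marginal contribution basis rule `f^T_{GWMC}[ω]`. -/
noncomputable def fGWMCbasis (ω : WeightSystem N) (T : Finset N) (i : N)
    (S : Finset N) : ℝ :=
  if i ∈ ω.bar T ∧ T ⊆ S then ω.lam i else 0

/-- The generalized weighted Shapley value distribution rule `f^{W'}_{GWSV}[ω]`. -/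
noncomputable def fGWSV (ω : WeightSystem N) (W' : Finset N → ℝ) (i : N)
    (S : Finset N) : ℝ :=
  ∑ T ∈ supp W', coeff W' T * fGWSVbasis ω T i S

/-- The generalized weighted marginal contribution distribution rule
`f^{W''}_{GWMC}[ω]`. -/
noncomputable def fGWMC (ω : WeightSystem N) (W'' : Finset N → ℝ) (i : N)
    (S : Finset N) : ℝ :=
  ∑ T ∈ supp W'', coeff W'' T * fGWMCbasis ω T i S

/-- The recursively defined basis distribution rules `f^T` of a distribution
rule `f` for `W` (recursion along the min-partition of `(𝒯^W, ⊆)`). -/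
noncomputable def basisRule (W : Finset N → ℝ) (f : N → Finset N → ℝ)
    (T : Finset N) (i : N) (S : Finset N) : ℝ :=
  if T ⊆ S then
    (1 / coeff W T) *
      (f i T - ∑ T' ∈ ((suppIn W T).erase T).attach,
        coeff W T'.1 * basisRule W f T'.1 i S)
  else 0
termination_by T.card
decreasing_by
  have h := T'.2
  simp only [Finset.mem_erase, suppIn, Finset.mem_filter] at h
  exact Finset.card_lt_card (Finset.ssubset_iff_subset_ne.mpr ⟨h.2.2, h.1⟩)




-- ## Auxiliary development

lemma neg_one_pow_sub (n k : ℕ) (h : k ≤ n) :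
    (-1 : ℝ) ^ (n - k) = (-1 : ℝ) ^ n * (-1 : ℝ) ^ k := by
  have h1 : (-1 : ℝ) ^ (n - k) * (-1 : ℝ) ^ k = (-1 : ℝ) ^ n := by
    rw [← pow_add]; congr 1; omega
  have h2 : (-1 : ℝ) ^ k * (-1 : ℝ) ^ k = 1 := by
    rw [← pow_add, ← two_mul, pow_mul]; norm_num
  calc (-1 : ℝ) ^ (n - k) = (-1 : ℝ) ^ (n-k) * ((-1:ℝ)^k * (-1:ℝ)^k) := by rw [h2, mul_one]
    _ = ((-1 : ℝ) ^ (n-k) * (-1:ℝ)^k) * (-1:ℝ)^k := by ring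
    _ = (-1 : ℝ) ^ n * (-1 : ℝ) ^ k := by rw [h1]

-- A1: interval Möbius sum
lemma sum_interval_neg_one (C0 D : Finset N) (hD : D ⊆ C0) :
    ∑ C ∈ C0.powerset.filter (fun C => D ⊆ C), (-1 : ℝ) ^ (C0.card - C.card)
      = if D = C0 then 1 else 0 := by
  classical
  have hbij : ∑ C ∈ C0.powerset.filter (fun C => D ⊆ C), (-1 : ℝ) ^ (C0.card - C.card)
      = ∑ E ∈ (C0 \ D).powerset, (-1 : ℝ) ^ ((C0 \ D).card - E.card) := by
    refine Finset.sum_nbij' (fun C => C \ D) (fun E => E ∪ D) ?_ ?_ ?_ ?_ ?_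
    · intro C hC
      simp only [Finset.mem_filter, Finset.mem_powerset] at hC ⊢
      exact Finset.sdiff_subset_sdiff hC.1 le_rfl
    · intro E hE
      simp only [Finset.mem_filter, Finset.mem_powerset] at hE ⊢
      exact ⟨Finset.union_subset (hE.trans (Finset.sdiff_subset)) hD,
        Finset.subset_union_right⟩
    · intro C hC
      simp only [Finset.mem_filter, Finset.mem_powerset] at hC
      exact Finset.sdiff_union_of_subset hC.2
    · intro E hE
      simp only [Finset.mem_powerset] at hE
      have hdisj : Disjoint E D := by
        refine Finset.disjoint_left.mpr fun x hx hxD => ?_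
        have := hE hx
        simp only [Finset.mem_sdiff] at this
        exact this.2 hxD
      rw [Finset.union_sdiff_distrib, Finset.sdiff_eq_self_of_disjoint hdisj,
        Finset.sdiff_self, Finset.union_empty]
    · intro C hC
      simp only [Finset.mem_filter, Finset.mem_powerset] at hC
      congr 1
      have h1 : (C0 \ D).card = C0.card - D.card := Finset.card_sdiff_of_subset hD
      have h2 : (C \ D).card = C.card - D.card := Finset.card_sdiff_of_subset hC.2
      have hDC : D.card ≤ C.card := Finset.card_le_card hC.2
      have hCC0 : C.card ≤ C0.card := Finset.card_le_card hC.1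
      omega
  rw [hbij]
  have hkey : ∀ E ∈ (C0 \ D).powerset, (-1 : ℝ) ^ ((C0 \ D).card - E.card)
      = (-1 : ℝ) ^ (C0 \ D).card * (-1 : ℝ) ^ E.card := fun E hE =>
    neg_one_pow_sub _ _ (Finset.card_le_card (Finset.mem_powerset.1 hE))
  rw [Finset.sum_congr rfl hkey, ← Finset.mul_sum]
  have hps : (∑ E ∈ (C0 \ D).powerset, (-1 : ℝ) ^ E.card)
      = if (C0 \ D) = ∅ then 1 else 0 := by
    have h1 := @Finset.sum_powerset_neg_one_pow_card N _ (C0 \ D)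
    have h2 : ((∑ m ∈ (C0 \ D).powerset, (-1 : ℤ) ^ m.card : ℤ) : ℝ)
        = ∑ E ∈ (C0 \ D).powerset, (-1 : ℝ) ^ E.card := by push_cast; ring_nf
    rw [← h2, h1]
    split <;> norm_num
  rw [hps]
  by_cases h : D = C0
  · subst h; simp
  · have hne : C0 \ D ≠ ∅ := by
      intro hemp
      have hc := Finset.card_sdiff_of_subset hD
      rw [hemp] at hc
      simp only [Finset.card_empty] at hc
      exact h (Finset.eq_of_subset_of_card_le hD (by omega))
    simp [h, hne]

lemma sum_interval_neg_one' (C0 D : Finset N) (hD : D ⊆ C0) :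
    ∑ C ∈ C0.powerset.filter (fun C => D ⊆ C), (-1 : ℝ) ^ (C.card - D.card)
      = if D = C0 then 1 else 0 := by
  classical
  have key : ∀ C ∈ C0.powerset.filter (fun C => D ⊆ C),
      (-1 : ℝ) ^ (C.card - D.card)
        = ((-1 : ℝ) ^ C0.card * (-1 : ℝ) ^ D.card) * (-1 : ℝ) ^ (C0.card - C.card) := by
    intro C hC
    simp only [Finset.mem_filter, Finset.mem_powerset] at hC
    have h1 : D.card ≤ C.card := Finset.card_le_card hC.2
    have h2 : C.card ≤ C0.card := Finset.card_le_card hC.1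
    rw [neg_one_pow_sub _ _ h1, neg_one_pow_sub _ _ h2]
    have hsq : ∀ k : ℕ, (-1:ℝ)^k * (-1:ℝ)^k = 1 := by
      intro k; rw [← pow_add, ← two_mul, pow_mul]; norm_num
    calc (-1:ℝ)^C.card * (-1:ℝ)^D.card
        = ((-1:ℝ)^C0.card * (-1:ℝ)^C0.card) * ((-1:ℝ)^C.card * (-1:ℝ)^D.card) := by
          rw [hsq]; ring
      _ = ((-1:ℝ)^C0.card * (-1:ℝ)^D.card) * ((-1:ℝ)^C0.card * (-1:ℝ)^C.card) := by ring
  rw [Finset.sum_congr rfl key, ← Finset.mul_sum, sum_interval_neg_one C0 D hD]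
  by_cases h : D = C0
  · subst h
    have hsq : ∀ k : ℕ, (-1:ℝ)^k * (-1:ℝ)^k = 1 := by
      intro k; rw [← pow_add, ← two_mul, pow_mul]; norm_num
    simp [hsq]
  · simp [h]

-- A2: Möbius inversion
lemma sum_coeff (W : Finset N → ℝ) (S : Finset N) :
    ∑ T ∈ S.powerset, coeff W T = W S := by
  classical
  unfold coeff
  have step1 : ∀ T ∈ S.powerset,
      (∑ R ∈ T.powerset, (-1 : ℝ) ^ (T.card - R.card) * W R)
      = ∑ R ∈ S.powerset, (if R ⊆ T then (-1 : ℝ) ^ (T.card - R.card) * W R else 0) := by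
    intro T hT
    simp only [Finset.mem_powerset] at hT
    have hpw : T.powerset = S.powerset.filter (fun R => R ⊆ T) := by
      ext R
      simp only [Finset.mem_powerset, Finset.mem_filter]
      exact ⟨fun h => ⟨h.trans hT, h⟩, fun h => h.2⟩
    rw [hpw, Finset.sum_filter]
  rw [Finset.sum_congr rfl step1, Finset.sum_comm]
  have step2 : ∀ R ∈ S.powerset,
      (∑ T ∈ S.powerset, (if R ⊆ T then (-1 : ℝ) ^ (T.card - R.card) * W R else 0))
      = W R * (if R = S then 1 else 0) := by
    intro R hR
    simp only [Finset.mem_powerset] at hR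
    rw [← sum_interval_neg_one' S R hR, Finset.sum_filter, Finset.mul_sum]
    refine Finset.sum_congr rfl fun T hT => ?_
    split <;> ring
  rw [Finset.sum_congr rfl step2]
  rw [Finset.sum_eq_single S]
  · simp
  · intro R hR hRS; simp [hRS]
  · intro h; exact absurd (Finset.mem_powerset.2 le_rfl) h

lemma mem_suppIn {W : Finset N → ℝ} {S T : Finset N} :
    T ∈ suppIn W S ↔ coeff W T ≠ 0 ∧ T ⊆ S := by
  simp [suppIn, supp, and_comm]

lemma sum_coeff_suppIn (W : Finset N → ℝ) (S : Finset N) :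
    ∑ T ∈ suppIn W S, coeff W T = W S := by
  classical
  rw [← sum_coeff W S]
  have : suppIn W S = S.powerset.filter (fun T => coeff W T ≠ 0) := by
    ext T; simp [mem_suppIn, and_comm]
  rw [this, Finset.sum_filter_ne_zero]

-- B: the recursive basis vector
noncomputable def cc (W : Finset N → ℝ) (f : N → Finset N → ℝ) (T : Finset N) (i : N) : ℝ :=
  (1 / coeff W T) *
    (f i T - ∑ T' ∈ ((suppIn W T).erase T).attach,
      coeff W T'.1 * cc W f T'.1 i)
termination_by T.card
decreasing_by
  have h := T'.2
  simp only [Finset.mem_erase, mem_suppIn] at h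
  exact Finset.card_lt_card (Finset.ssubset_iff_subset_ne.mpr ⟨h.2.2, h.1⟩)

lemma cc_def (W : Finset N → ℝ) (f : N → Finset N → ℝ) (T : Finset N) (i : N) :
    cc W f T i = (1 / coeff W T) *
      (f i T - ∑ T' ∈ (suppIn W T).erase T, coeff W T' * cc W f T' i) := by
  rw [cc, ← Finset.sum_attach ((suppIn W T).erase T) (fun T' => coeff W T' * cc W f T' i)]

-- strong induction principle on card
lemma cc_not_mem (W : Finset N → ℝ) (f : N → Finset N → ℝ) (hdist : DistRule f) :
    ∀ (T : Finset N) (i : N), i ∉ T → cc W f T i = 0 := by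
  intro T
  induction T using Finset.strongInduction with
  | _ T ih =>
    intro i hi
    rw [cc_def]
    have h1 : f i T = 0 := hdist i T hi
    have h2 : ∑ T' ∈ (suppIn W T).erase T, coeff W T' * cc W f T' i = 0 := by
      refine Finset.sum_eq_zero fun T' hT' => ?_
      simp only [Finset.mem_erase, mem_suppIn] at hT'
      have hsub : T' ⊂ T := Finset.ssubset_iff_subset_ne.mpr ⟨hT'.2.2, hT'.1⟩
      rw [ih T' hsub i (fun h => hi (hT'.2.2 h)), mul_zero]
    rw [h1, h2]; ring

lemma mem_supp {W : Finset N → ℝ} {T : Finset N} : T ∈ supp W ↔ coeff W T ≠ 0 := by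
  simp [supp]

lemma cc_spec (W : Finset N → ℝ) (f : N → Finset N → ℝ) {T : Finset N}
    (hT : T ∈ supp W) (i : N) :
    f i T = ∑ T' ∈ suppIn W T, coeff W T' * cc W f T' i := by
  classical
  have hq : coeff W T ≠ 0 := mem_supp.1 hT
  have hmem : T ∈ suppIn W T := mem_suppIn.2 ⟨hq, le_rfl⟩
  have hE : ∑ T' ∈ (suppIn W T).erase T, coeff W T' * cc W f T' i
      = (∑ T' ∈ suppIn W T, coeff W T' * cc W f T' i) - coeff W T * cc W f T i :=
    Finset.sum_erase_eq_sub hmem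
  have h : coeff W T * cc W f T i
      = f i T - ∑ T' ∈ (suppIn W T).erase T, coeff W T' * cc W f T' i := by
    rw [cc_def]; field_simp
  rw [hE] at h
  linarith

lemma cc_sum (W : Finset N → ℝ) (f : N → Finset N → ℝ) (hdist : DistRule f)
    (hbb : BudgetBalanced W f) :
    ∀ T : Finset N, T ∈ supp W → ∑ i ∈ T, cc W f T i = 1 := by
  intro T
  induction T using Finset.strongInduction with
  | _ T ih =>
    intro hT
    have hq : coeff W T ≠ 0 := mem_supp.1 hT
    have hspec : ∀ i, f i T = ∑ T' ∈ suppIn W T, coeff W T' * cc W f T' i :=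
      cc_spec W f hT
    have h1 : W T = ∑ T' ∈ suppIn W T, coeff W T' * (∑ i ∈ T, cc W f T' i) := by
      rw [← hbb T, Finset.sum_congr rfl (fun i _ => hspec i), Finset.sum_comm]
      exact Finset.sum_congr rfl fun T' _ => by rw [Finset.mul_sum]
    have h2 : ∀ T' ∈ (suppIn W T).erase T, (∑ i ∈ T, cc W f T' i) = 1 := by
      intro T' hT'
      simp only [Finset.mem_erase, mem_suppIn] at hT'
      have hsub : T' ⊂ T := Finset.ssubset_iff_subset_ne.mpr ⟨hT'.2.2, hT'.1⟩
      have : ∑ i ∈ T, cc W f T' i = ∑ i ∈ T', cc W f T' i := by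
        refine (Finset.sum_subset hT'.2.2 fun i _ hi => ?_).symm
        exact cc_not_mem W f hdist T' i hi
      rw [this]
      exact ih T' hsub (mem_supp.2 hT'.2.1)
    have hmem : T ∈ suppIn W T := mem_suppIn.2 ⟨hq, le_rfl⟩
    rw [← Finset.add_sum_erase _ _ hmem] at h1
    have h2' : ∀ T' ∈ (suppIn W T).erase T,
        coeff W T' * (∑ i ∈ T, cc W f T' i) = coeff W T' * 1 := fun T' hT' => by
      rw [h2 T' hT']
    rw [Finset.sum_congr rfl h2'] at h1
    have h3 : ∑ T' ∈ (suppIn W T).erase T, coeff W T' * 1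
        = W T - coeff W T := by
      have := sum_coeff_suppIn W T
      rw [← Finset.add_sum_erase _ _ hmem] at this
      simp only [mul_one]
      linarith
    rw [h3] at h1
    have hmul : coeff W T * (∑ i ∈ T, cc W f T i) = coeff W T * 1 := by
      rw [mul_one]; linarith
    exact mul_left_cancel₀ hq hmul

-- ## The matching pennies style game
def iact (C0 : Finset N) (s : Bool) : Finset (Finset N × Bool) :=
  C0.powerset.image (fun C => (C, s))

def jact (C0 : Finset N) (bσ : Finset N → Bool) (t : Bool) : Finset (Finset N × Bool) :=
  C0.powerset.image (fun C => (C, xor (bσ C) t))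

def anch (C0 : Finset N) (u : N) : Finset (Finset N × Bool) :=
  (C0.powerset.filter (fun C => u ∈ C)).image (fun C => (C, false)) ∪
  (C0.powerset.filter (fun C => u ∈ C)).image (fun C => (C, true))

lemma mem_iact {C0 : Finset N} {s : Bool} {C : Finset N} {b : Bool} :
    (C, b) ∈ iact C0 s ↔ C ⊆ C0 ∧ b = s := by
  simp only [iact, Finset.mem_image, Finset.mem_powerset, Prod.mk.injEq]
  constructor
  · rintro ⟨C', hC', rfl, rfl⟩; exact ⟨hC', rfl⟩
  · rintro ⟨h1, rfl⟩; exact ⟨C, h1, rfl, rfl⟩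

lemma mem_jact {C0 : Finset N} {bσ : Finset N → Bool} {t : Bool} {C : Finset N} {b : Bool} :
    (C, b) ∈ jact C0 bσ t ↔ C ⊆ C0 ∧ b = xor (bσ C) t := by
  simp only [jact, Finset.mem_image, Finset.mem_powerset, Prod.mk.injEq]
  constructor
  · rintro ⟨C', hC', rfl, rfl⟩; exact ⟨hC', rfl⟩
  · rintro ⟨h1, rfl⟩; exact ⟨C, h1, rfl, rfl⟩

lemma mem_anch {C0 : Finset N} {u : N} {C : Finset N} {b : Bool} :
    (C, b) ∈ anch C0 u ↔ C ⊆ C0 ∧ u ∈ C := by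
  simp only [anch, Finset.mem_union, Finset.mem_image, Finset.mem_filter,
    Finset.mem_powerset, Prod.mk.injEq]
  constructor
  · rintro (⟨C', ⟨h1, h2⟩, rfl, rfl⟩ | ⟨C', ⟨h1, h2⟩, rfl, rfl⟩) <;> exact ⟨h1, h2⟩
  · rintro ⟨h1, h2⟩
    cases b
    · exact Or.inl ⟨C, ⟨h1, h2⟩, rfl, rfl⟩
    · exact Or.inr ⟨C, ⟨h1, h2⟩, rfl, rfl⟩

@[reducible] def MPG (W : Finset N → ℝ) (i j : N) (C0 : Finset N) (bσ : Finset N → Bool) : Game N where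
  R := Finset N × Bool
  act u := if u = i then {iact C0 false, iact C0 true}
           else if u = j then {jact C0 bσ false, jact C0 bσ true}
           else {anch C0 u}
  act_nonempty u := by
    split_ifs <;> simp
  Wr _ := W

lemma playersAt_MPG (W : Finset N → ℝ) (i j : N) (hij : i ≠ j) (C0 : Finset N)
    (hi : i ∉ C0) (hj : j ∉ C0) (bσ : Finset N → Bool) (s t : Bool)
    (a : N → Finset (Finset N × Bool))
    (hai : a i = iact C0 s) (haj : a j = jact C0 bσ t)
    (hoth : ∀ u, u ≠ i → u ≠ j → a u = anch C0 u)
    (C : Finset N) (hC : C ⊆ C0) (b : Bool) :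
    playersAt (G := MPG W i j C0 bσ) a (C, b)
      = if s = b
        then (if xor (bσ C) t = b then insert i (insert j C) else insert i C)
        else (if xor (bσ C) t = b then insert j C else C) := by
  ext u
  simp only [playersAt, Finset.mem_filter, Finset.mem_univ, true_and]
  by_cases hui : u = i
  · subst hui
    rw [hai, mem_iact]
    have hiC : u ∉ C := fun h => hi (hC h)
    have hunj : u ≠ j := hij
    constructor
    · rintro ⟨-, rfl⟩
      rw [if_pos rfl]
      split
      · exact Finset.mem_insert_self _ _
      · exact Finset.mem_insert_self _ _
    · intro hmem
      refine ⟨hC, ?_⟩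
      by_cases hsb : s = b
      · exact hsb.symm
      · exfalso
        rw [if_neg hsb] at hmem
        rcases Decidable.em (xor (bσ C) t = b) with h | h
        · rw [if_pos h] at hmem
          simp only [Finset.mem_insert] at hmem
          rcases hmem with h1 | h1
          · exact hunj h1
          · exact hiC h1
        · rw [if_neg h] at hmem
          exact hiC hmem
  · by_cases huj : u = j
    · subst huj
      rw [haj, mem_jact]
      have hjC : u ∉ C := fun h => hj (hC h)
      constructor
      · rintro ⟨-, rfl⟩
        simp only [if_pos (rfl : (xor (bσ C) t) = (xor (bσ C) t))]
        split
        · exact Finset.mem_insert_of_mem (Finset.mem_insert_self _ _)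
        · exact Finset.mem_insert_self _ _
      · intro hmem
        refine ⟨hC, ?_⟩
        by_cases hxb : xor (bσ C) t = b
        · exact hxb.symm
        · exfalso
          simp only [if_neg hxb] at hmem
          rcases Decidable.em (s = b) with h | h
          · simp only [if_pos h, Finset.mem_insert] at hmem
            rcases hmem with h1 | h1
            · exact hui h1
            · exact hjC h1
          · simp only [if_neg h] at hmem
            exact hjC hmem
    · rw [hoth u hui huj, mem_anch]
      constructor
      · rintro ⟨-, h2⟩
        split <;> split <;> simp [Finset.mem_insert, h2]
      · intro hmem
        refine ⟨hC, ?_⟩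
        split at hmem <;> split at hmem <;>
          (try simp only [Finset.mem_insert] at hmem) <;> tauto

lemma util_i (W : Finset N → ℝ) (f : N → Finset N → ℝ) (i j : N) (hij : i ≠ j)
    (C0 : Finset N) (hi : i ∉ C0) (hj : j ∉ C0) (bσ : Finset N → Bool) (s t : Bool)
    (a : N → Finset (Finset N × Bool))
    (hai : a i = iact C0 s) (haj : a j = jact C0 bσ t)
    (hoth : ∀ u, u ≠ i → u ≠ j → a u = anch C0 u) :
    utility (MPG W i j C0 bσ) (fun _ => f) a i
      = ∑ C ∈ C0.powerset,
          (if xor (bσ C) t = s then f i (insert i (insert j C)) else f i (insert i C)) := by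
  unfold utility
  rw [show a i = iact C0 s from hai]
  unfold iact
  rw [Finset.sum_image (by intro x hx y hy h; exact congrArg Prod.fst h)]
  refine Finset.sum_congr rfl fun C hC => ?_
  rw [playersAt_MPG W i j hij C0 hi hj bσ s t a hai haj hoth C (Finset.mem_powerset.1 hC) s,
    if_pos rfl]
  exact apply_ite (f i) _ _ _

lemma util_j (W : Finset N → ℝ) (f : N → Finset N → ℝ) (i j : N) (hij : i ≠ j)
    (C0 : Finset N) (hi : i ∉ C0) (hj : j ∉ C0) (bσ : Finset N → Bool) (s t : Bool)
    (a : N → Finset (Finset N × Bool))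
    (hai : a i = iact C0 s) (haj : a j = jact C0 bσ t)
    (hoth : ∀ u, u ≠ i → u ≠ j → a u = anch C0 u) :
    utility (MPG W i j C0 bσ) (fun _ => f) a j
      = ∑ C ∈ C0.powerset,
          (if xor (bσ C) t = s then f j (insert i (insert j C)) else f j (insert j C)) := by
  unfold utility
  rw [show a j = jact C0 bσ t from haj]
  unfold jact
  rw [Finset.sum_image (by intro x hx y hy h; exact congrArg Prod.fst h)]
  refine Finset.sum_congr rfl fun C hC => ?_
  rw [playersAt_MPG W i j hij C0 hi hj bσ s t a hai haj hoth C (Finset.mem_powerset.1 hC)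
    (xor (bσ C) t)]
  by_cases h : s = xor (bσ C) t
  · simp [h]
  · have h' : ¬(xor (bσ C) t = s) := fun hh => h hh.symm
    simp [h, h']

lemma key_game (W : Finset N → ℝ) (f : N → Finset N → ℝ) (hPNE : GuaranteesPNE1 W f)
    (i j : N) (hij : i ≠ j) (C0 : Finset N) (hi : i ∉ C0) (hj : j ∉ C0)
    (bσ : Finset N → Bool) :
    0 ≤ (∑ C ∈ C0.powerset,
          (if bσ C then (-1:ℝ) else 1) * (f i (insert i (insert j C)) - f i (insert i C)))
      * (∑ C ∈ C0.powerset,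
          (if bσ C then (-1:ℝ) else 1) * (f j (insert i (insert j C)) - f j (insert j C))) := by
  classical
  set I := ∑ C ∈ C0.powerset,
      (if bσ C then (-1:ℝ) else 1) * (f i (insert i (insert j C)) - f i (insert i C)) with hI
  set J := ∑ C ∈ C0.powerset,
      (if bσ C then (-1:ℝ) else 1) * (f j (insert i (insert j C)) - f j (insert j C)) with hJ
  obtain ⟨a, ha, hbr⟩ := hPNE (MPG W i j C0 bσ) (fun _ => rfl)
  have hacti : (MPG W i j C0 bσ).act i = {iact C0 false, iact C0 true} := by
    simp [MPG]
  have hactj : (MPG W i j C0 bσ).act j = {jact C0 bσ false, jact C0 bσ true} := by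
    simp [MPG, Ne.symm hij]
  have hoth : ∀ u, u ≠ i → u ≠ j → a u = anch C0 u := by
    intro u h1 h2
    have hu := ha u
    simp only [MPG, if_neg h1, if_neg h2, Finset.mem_singleton] at hu
    exact hu
  obtain ⟨s, hs⟩ : ∃ s, a i = iact C0 s := by
    have h := ha i; rw [hacti] at h
    rcases Finset.mem_insert.1 h with h | h
    · exact ⟨false, h⟩
    · exact ⟨true, Finset.mem_singleton.1 h⟩
  obtain ⟨t, ht⟩ : ∃ t, a j = jact C0 bσ t := by
    have h := ha j; rw [hactj] at h
    rcases Finset.mem_insert.1 h with h | h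
    · exact ⟨false, h⟩
    · exact ⟨true, Finset.mem_singleton.1 h⟩
  -- payoff formulas
  set Ui : Bool → Bool → ℝ := fun s' t' => ∑ C ∈ C0.powerset,
      (if xor (bσ C) t' = s' then f i (insert i (insert j C)) else f i (insert i C)) with hUi
  set Uj : Bool → Bool → ℝ := fun s' t' => ∑ C ∈ C0.powerset,
      (if xor (bσ C) t' = s' then f j (insert i (insert j C)) else f j (insert j C)) with hUj
  have ei : utility (MPG W i j C0 bσ) (fun _ => f) a i = Ui s t :=
    util_i W f i j hij C0 hi hj bσ s t a hs ht hoth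
  have ej : utility (MPG W i j C0 bσ) (fun _ => f) a j = Uj s t :=
    util_j W f i j hij C0 hi hj bσ s t a hs ht hoth
  -- deviations
  have hdevi : Ui (!s) t ≤ Ui s t := by
    have hmem : iact C0 (!s) ∈ (MPG W i j C0 bσ).act i := by
      rw [hacti]; cases s <;> simp
    have h := hbr i (iact C0 (!s)) hmem
    rw [ei] at h
    have e2 : utility (MPG W i j C0 bσ) (fun _ => f)
        (Function.update a i (iact C0 (!s))) i = Ui (!s) t := by
      refine util_i W f i j hij C0 hi hj bσ (!s) t _ ?_ ?_ ?_
      · exact Function.update_self i _ a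
      · rw [Function.update_of_ne (Ne.symm hij)]; exact ht
      · intro u h1 h2
        rw [Function.update_of_ne h1]; exact hoth u h1 h2
    rw [e2] at h
    exact h
  have hdevj : Uj s (!t) ≤ Uj s t := by
    have hmem : jact C0 bσ (!t) ∈ (MPG W i j C0 bσ).act j := by
      rw [hactj]; cases t <;> simp
    have h := hbr j (jact C0 bσ (!t)) hmem
    rw [ej] at h
    have e2 : utility (MPG W i j C0 bσ) (fun _ => f)
        (Function.update a j (jact C0 bσ (!t))) j = Uj s (!t) := by
      refine util_j W f i j hij C0 hi hj bσ s (!t) _ ?_ ?_ ?_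
      · rw [Function.update_of_ne hij]; exact hs
      · exact Function.update_self j _ a
      · intro u h1 h2
        rw [Function.update_of_ne h2]; exact hoth u h1 h2
    rw [e2] at h
    exact h
  -- difference identities
  have di : Ui s t - Ui (!s) t
      = (if s then (1:ℝ) else -1) * (if t then 1 else -1) * I := by
    rw [hUi, hI]
    simp only []
    rw [← Finset.sum_sub_distrib, Finset.mul_sum]
    refine Finset.sum_congr rfl fun C hC => ?_
    rcases hb : bσ C <;> cases s <;> cases t <;> simp [hb] <;> ring
  have dj : Uj s t - Uj s (!t)
      = (if s then (1:ℝ) else -1) * (if t then 1 else -1) * J := by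
    rw [hUj, hJ]
    simp only []
    rw [← Finset.sum_sub_distrib, Finset.mul_sum]
    refine Finset.sum_congr rfl fun C hC => ?_
    rcases hb : bσ C <;> cases s <;> cases t <;> simp [hb] <;> ring
  have h1 : 0 ≤ (if s then (1:ℝ) else -1) * (if t then 1 else -1) * I := by
    rw [← di]; linarith
  have h2 : 0 ≤ (if s then (1:ℝ) else -1) * (if t then 1 else -1) * J := by
    rw [← dj]; linarith
  cases s <;> cases t <;> simp at h1 h2 <;> nlinarith [h1, h2]

-- ### Part E : Möbius extraction
section Extraction
variable (W : Finset N → ℝ) (f : N → Finset N → ℝ)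

/-- The "error plus top-coefficient" extraction. -/
lemma extraction (hdist : DistRule f) (O : Finset N) (i j : N)
    (hiO : i ∈ O) (hjO : j ∈ O) (hij : i ≠ j)
    (ih : ∀ O' : Finset N, O'.card < O.card →
      ∀ u, f u O' = ∑ T ∈ suppIn W O', coeff W T * cc W f T u) :
    ∑ C ∈ (O \ {i, j}).powerset,
        (-1 : ℝ) ^ ((O \ {i, j}).card - C.card)
          * (f i (insert i (insert j C)) - f i (insert i C))
      = f i O - ∑ T ∈ (suppIn W O).erase O, coeff W T * cc W f T i := by
  classical
  set C0 := O \ {i, j} with hC0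
  have hiC0 : i ∉ C0 := by simp [hC0]
  have hjC0 : j ∉ C0 := by simp [hC0]
  have hC0O : C0 ⊆ O := Finset.sdiff_subset
  have hO : O = insert i (insert j C0) := by
    ext u
    simp only [Finset.mem_insert, hC0, Finset.mem_sdiff, Finset.mem_insert,
      Finset.mem_singleton]
    constructor
    · intro hu
      by_cases h1 : u = i
      · exact Or.inl h1
      · by_cases h2 : u = j
        · exact Or.inr (Or.inl h2)
        · exact Or.inr (Or.inr ⟨hu, fun h => h.elim h1 h2⟩)
    · rintro (rfl | rfl | ⟨hu, -⟩) <;> assumption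
  -- the auxiliary sum function
  set g : Finset N → ℝ := fun S =>
    ∑ T ∈ suppIn W O, (if T ⊆ S then coeff W T * cc W f T i else 0) with hg
  have hgEq : ∀ S : Finset N, S ⊆ O →
      g S = ∑ T ∈ suppIn W S, coeff W T * cc W f T i := by
    intro S hS
    rw [hg]
    simp only []
    rw [← Finset.sum_filter]
    congr 1
    ext T
    simp only [Finset.mem_filter, mem_suppIn]
    constructor
    · rintro ⟨⟨h1, -⟩, h3⟩; exact ⟨h1, h3⟩
    · rintro ⟨h1, h2⟩; exact ⟨⟨h1, h2.trans hS⟩, h2⟩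
  have hfg : ∀ S : Finset N, S ⊆ O → S.card < O.card → f i S = g S := by
    intro S h1 h2
    rw [hgEq S h1]
    exact ih S h2 i
  have hbigsub : ∀ C ∈ C0.powerset, insert i (insert j C) ⊆ O := by
    intro C hC
    rw [hO]
    exact Finset.insert_subset_insert _
      (Finset.insert_subset_insert _ (Finset.mem_powerset.1 hC))
  have hsmallsub : ∀ C ∈ C0.powerset, insert i C ⊆ O := by
    intro C hC
    exact Finset.insert_subset hiO ((Finset.mem_powerset.1 hC).trans hC0O)
  have hsmallcard : ∀ C ∈ C0.powerset, (insert i C).card < O.card := by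
    intro C hC
    refine Finset.card_lt_card (Finset.ssubset_iff_of_subset (hsmallsub C hC) |>.2 ⟨j, hjO, ?_⟩)
    simp only [Finset.mem_insert]
    rintro (rfl | hjc)
    · exact hij rfl
    · exact hjC0 ((Finset.mem_powerset.1 hC) hjc)
  have hbigcard : ∀ C ∈ C0.powerset, C ≠ C0 → (insert i (insert j C)).card < O.card := by
    intro C hC hne
    obtain ⟨x, hx1, hx2⟩ := Finset.exists_of_ssubset
      (Finset.ssubset_iff_subset_ne.2 ⟨Finset.mem_powerset.1 hC, hne⟩)
    refine Finset.card_lt_card (Finset.ssubset_iff_of_subset (hbigsub C hC) |>.2 ⟨x, hC0O hx1, ?_⟩)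
    simp only [Finset.mem_insert]
    rintro (rfl | rfl | hxc)
    · exact hiC0 hx1
    · exact hjC0 hx1
    · exact hx2 hxc
  -- step 1 : rewrite each summand
  have step1 : ∀ C ∈ C0.powerset,
      f i (insert i (insert j C)) - f i (insert i C)
        = (if C = C0 then (f i O - g O) else 0)
          + (g (insert i (insert j C)) - g (insert i C)) := by
    intro C hC
    have hsm : f i (insert i C) = g (insert i C) :=
      hfg _ (hsmallsub C hC) (hsmallcard C hC)
    by_cases h : C = C0
    · subst h
      rw [if_pos rfl, ← hO, hsm]
      ring
    · rw [if_neg h, hfg _ (hbigsub C hC) (hbigcard C hC h), hsm]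
      ring
  rw [Finset.sum_congr rfl (fun C hC => by rw [step1 C hC])]
  simp only [mul_add]
  rw [Finset.sum_add_distrib]
  -- the C = C0 part
  have part1 : ∑ C ∈ C0.powerset,
      (-1 : ℝ) ^ (C0.card - C.card) * (if C = C0 then (f i O - g O) else 0)
        = f i O - g O := by
    rw [Finset.sum_eq_single C0]
    · simp
    · intro C hC hne
      rw [if_neg hne, mul_zero]
    · intro h
      exact absurd (Finset.mem_powerset.2 le_rfl) h
  rw [part1]
  -- the interaction part
  have chi : ∀ T ∈ suppIn W O, ∀ C ∈ C0.powerset,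
      g (insert i (insert j C)) - g (insert i C)
        = g (insert i (insert j C)) - g (insert i C) := fun _ _ _ _ => rfl
  have step2 : ∀ C ∈ C0.powerset,
      g (insert i (insert j C)) - g (insert i C)
        = ∑ T ∈ suppIn W O,
            (if j ∈ T ∧ T \ {i, j} ⊆ C then coeff W T * cc W f T i else 0) := by
    intro C hC
    have hCC0 : C ⊆ C0 := Finset.mem_powerset.1 hC
    rw [hg]
    simp only []
    rw [← Finset.sum_sub_distrib]
    refine Finset.sum_congr rfl fun T hT => ?_
    have hch1 : T ⊆ insert i (insert j C) ↔ T \ {i, j} ⊆ C := by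
      constructor
      · intro h u hu
        simp only [Finset.mem_sdiff, Finset.mem_insert, Finset.mem_singleton] at hu
        have := h hu.1
        simp only [Finset.mem_insert] at this
        rcases this with rfl | rfl | h'
        · exact absurd (Or.inl rfl) hu.2
        · exact absurd (Or.inr rfl) hu.2
        · exact h'
      · intro h u hu
        simp only [Finset.mem_insert]
        by_cases h1 : u = i
        · exact Or.inl h1
        · by_cases h2 : u = j
          · exact Or.inr (Or.inl h2)
          · refine Or.inr (Or.inr (h ?_))
            simp only [Finset.mem_sdiff, Finset.mem_insert, Finset.mem_singleton]
            exact ⟨hu, fun hh => hh.elim h1 h2⟩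
    have hch2 : T ⊆ insert i C ↔ (j ∉ T ∧ T \ {i, j} ⊆ C) := by
      constructor
      · intro h
        constructor
        · intro hjT
          have := h hjT
          simp only [Finset.mem_insert] at this
          rcases this with h' | h'
          · exact hij h'.symm
          · exact hjC0 (hCC0 h')
        · intro u hu
          simp only [Finset.mem_sdiff, Finset.mem_insert, Finset.mem_singleton] at hu
          have := h hu.1
          simp only [Finset.mem_insert] at this
          rcases this with rfl | h'
          · exact absurd (Or.inl rfl) hu.2
          · exact h'
      · rintro ⟨hjT, h⟩ u hu
        simp only [Finset.mem_insert]
        by_cases h1 : u = i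
        · exact Or.inl h1
        · refine Or.inr (h ?_)
          simp only [Finset.mem_sdiff, Finset.mem_insert, Finset.mem_singleton]
          refine ⟨hu, fun hh => hh.elim h1 (fun h2 => hjT (h2 ▸ hu))⟩
    by_cases hjT : j ∈ T
    · by_cases hsub : T \ {i, j} ⊆ C
      · rw [if_pos (hch1.2 hsub), if_neg (fun h => (hch2.1 h).1 hjT), if_pos ⟨hjT, hsub⟩]
        ring
      · rw [if_neg (fun h => hsub (hch1.1 h)), if_neg (fun h => (hch2.1 h).1 hjT),
          if_neg (fun h => hsub h.2)]
        ring
    · by_cases hsub : T \ {i, j} ⊆ C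
      · rw [if_pos (hch1.2 hsub), if_pos (hch2.2 ⟨hjT, hsub⟩),
          if_neg (fun h => hjT h.1)]
        ring
      · rw [if_neg (fun h => hsub (hch1.1 h)), if_neg (fun h => hsub (hch2.1 h).2),
          if_neg (fun h => hjT h.1)]
        ring
  rw [Finset.sum_congr rfl (fun C hC => by rw [step2 C hC])]
  have swap : ∑ C ∈ C0.powerset, (-1:ℝ)^(C0.card - C.card)
        * (∑ T ∈ suppIn W O, (if j ∈ T ∧ T \ {i, j} ⊆ C then coeff W T * cc W f T i else 0))
      = ∑ T ∈ suppIn W O, (if T = O then coeff W T * cc W f T i else 0) := by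
    have e1 : ∀ C ∈ C0.powerset, (-1:ℝ)^(C0.card - C.card)
          * (∑ T ∈ suppIn W O, (if j ∈ T ∧ T \ {i, j} ⊆ C then coeff W T * cc W f T i else 0))
        = ∑ T ∈ suppIn W O, (-1:ℝ)^(C0.card - C.card)
            * (if j ∈ T ∧ T \ {i, j} ⊆ C then coeff W T * cc W f T i else 0) := by
      intro C hC
      rw [Finset.mul_sum]
    rw [Finset.sum_congr rfl e1, Finset.sum_comm]
    refine Finset.sum_congr rfl fun T hT => ?_
    have hTO : T ⊆ O := (mem_suppIn.1 hT).2
    by_cases hjT : j ∈ T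
    · have hD : T \ {i, j} ⊆ C0 := by
        rw [hC0]
        exact Finset.sdiff_subset_sdiff hTO le_rfl
      have e2 : ∀ C ∈ C0.powerset,
          (-1:ℝ)^(C0.card - C.card) * (if j ∈ T ∧ T \ {i, j} ⊆ C then coeff W T * cc W f T i else 0)
            = (if T \ {i, j} ⊆ C then (-1:ℝ)^(C0.card - C.card) else 0) * (coeff W T * cc W f T i) := by
        intro C hC
        by_cases h : T \ {i, j} ⊆ C
        · rw [if_pos ⟨hjT, h⟩, if_pos h]
        · rw [if_neg (fun hh => h hh.2), if_neg h]
          ring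
      rw [Finset.sum_congr rfl e2, ← Finset.sum_mul, ← Finset.sum_filter,
        sum_interval_neg_one C0 (T \ {i, j}) hD]
      by_cases hDC : T \ {i, j} = C0
      · rw [if_pos hDC]
        by_cases hiT : i ∈ T
        · have hTeq : T = O := by
            apply Finset.Subset.antisymm hTO
            intro u hu
            rw [hO] at hu
            simp only [Finset.mem_insert] at hu
            rcases hu with rfl | rfl | hu
            · exact hiT
            · exact hjT
            · have : u ∈ T \ {i, j} := hDC ▸ hu
              exact (Finset.mem_sdiff.1 this).1
          rw [if_pos hTeq]
          ring
        · have hTne : T ≠ O := fun h => hiT (h ▸ hiO)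
          rw [if_neg hTne, cc_not_mem W f hdist T i hiT]
          ring
      · have hTne : T ≠ O := by
          intro h
          subst h
          exact hDC rfl
        rw [if_neg hDC, if_neg hTne]
        ring
    · have e2 : ∀ C ∈ C0.powerset,
          (-1:ℝ)^(C0.card - C.card) * (if j ∈ T ∧ T \ {i, j} ⊆ C then coeff W T * cc W f T i else 0)
            = 0 := by
        intro C hC
        rw [if_neg (fun hh => hjT hh.1)]
        ring
      rw [Finset.sum_congr rfl e2, Finset.sum_const, smul_zero]
      rw [if_neg (fun h : T = O => hjT (by rw [h]; exact hjO))]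
  rw [swap]
  have hgO : g O = ∑ T ∈ suppIn W O, coeff W T * cc W f T i := hgEq O le_rfl
  rw [Finset.sum_ite_eq' (suppIn W O) O (fun T => coeff W T * cc W f T i)]
  by_cases hOs : O ∈ suppIn W O
  · rw [if_pos hOs]
    have h2 : ∑ T ∈ suppIn W O, coeff W T * cc W f T i
        = coeff W O * cc W f O i + ∑ T ∈ (suppIn W O).erase O, coeff W T * cc W f T i :=
      (Finset.add_sum_erase _ _ hOs).symm
    rw [hgO, h2]
    show f i O - (coeff W O * cc W f O i + _) + coeff W O * cc W f O i = _
    ring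
  · rw [if_neg hOs, Finset.erase_eq_of_notMem hOs, hgO]
    ring

end Extraction

section MainInduction
variable (W : Finset N → ℝ) (f : N → Finset N → ℝ)

lemma sign_eq (m : ℕ) : (if decide (Odd m) then (-1:ℝ) else 1) = (-1:ℝ)^m := by
  rcases Nat.even_or_odd m with h | h
  · rw [h.neg_one_pow]
    simp [Nat.not_odd_iff_even.2 h]
  · rw [h.neg_one_pow]
    simp [h]

lemma keyM (hdist : DistRule f) (hbb : BudgetBalanced W f) (hPNE : GuaranteesPNE1 W f)
    (O : Finset N) (i j : N) (hiO : i ∈ O) (hjO : j ∈ O) (hij : i ≠ j)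
    (ih : ∀ O' : Finset N, O'.card < O.card →
      ∀ u, f u O' = ∑ T ∈ suppIn W O', coeff W T * cc W f T u) :
    0 ≤ (f i O - ∑ T ∈ (suppIn W O).erase O, coeff W T * cc W f T i)
      * (f j O - ∑ T ∈ (suppIn W O).erase O, coeff W T * cc W f T j) := by
  classical
  set C0 := O \ {i, j} with hC0
  have hiC0 : i ∉ C0 := by simp [hC0]
  have hjC0 : j ∉ C0 := by simp [hC0]
  have hkey := key_game W f hPNE i j hij C0 hiC0 hjC0
    (fun C => decide (Odd (C0.card - C.card)))
  have hsgn : ∀ C : Finset N, (if decide (Odd (C0.card - C.card)) then (-1:ℝ) else 1)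
      = (-1:ℝ)^(C0.card - C.card) := fun C => sign_eq _
  simp only [hsgn] at hkey
  have hei := extraction W f hdist O i j hiO hjO hij ih
  have hejpre := extraction W f hdist O j i hjO hiO (Ne.symm hij) ih
  have hpair : O \ {j, i} = C0 := by rw [hC0, Finset.pair_comm]
  rw [hpair] at hejpre
  have hej : ∑ C ∈ C0.powerset,
      (-1 : ℝ) ^ (C0.card - C.card) * (f j (insert i (insert j C)) - f j (insert j C))
      = f j O - ∑ T ∈ (suppIn W O).erase O, coeff W T * cc W f T j := by
    rw [← hejpre]
    exact Finset.sum_congr rfl fun C _ => by rw [Finset.insert_comm]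
  rw [← hC0] at hei
  rw [hei, hej] at hkey
  exact hkey

lemma main_induction (hW0 : W ∅ = 0) (hdist : DistRule f) (hbb : BudgetBalanced W f)
    (hPNE : GuaranteesPNE1 W f) :
    ∀ (n : ℕ) (O : Finset N), O.card = n →
      (∀ u, f u O = ∑ T ∈ suppIn W O, coeff W T * cc W f T u)
        ∧ (O ∈ supp W → ∀ u, 0 ≤ cc W f O u) := by
  classical
  intro n
  induction n using Nat.strong_induction_on with
  | _ n ih =>
    intro O hOcard
    have ihS : ∀ O' : Finset N, O'.card < O.card →
        ∀ u, f u O' = ∑ T ∈ suppIn W O', coeff W T * cc W f T u := by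
      intro O' h u
      exact (ih O'.card (hOcard ▸ h) O' rfl).1 u
    constructor
    · -- goodS
      by_cases hOsupp : O ∈ supp W
      · exact fun u => cc_spec W f hOsupp u
      · intro u
        by_cases huO : u ∈ O
        · -- the ε argument
          have hErase : (suppIn W O).erase O = suppIn W O :=
            Finset.erase_eq_of_notMem (fun h => hOsupp (Finset.mem_filter.1 h).1)
          have hM : ∀ v w, v ∈ O → w ∈ O → v ≠ w →
              0 ≤ (f v O - ∑ T ∈ suppIn W O, coeff W T * cc W f T v)
                * (f w O - ∑ T ∈ suppIn W O, coeff W T * cc W f T w) := by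
            intro v w hv hw hvw
            have := keyM W f hdist hbb hPNE O v w hv hw hvw ihS
            rwa [hErase] at this
          set ε : N → ℝ := fun v => f v O - ∑ T ∈ suppIn W O, coeff W T * cc W f T v
            with hε
          have hMε : ∀ v w, v ∈ O → w ∈ O → v ≠ w → 0 ≤ ε v * ε w :=
            fun v w hv hw hvw => hM v w hv hw hvw
          have hsum : ∑ v ∈ O, ε v = 0 := by
            rw [hε]
            simp only []
            rw [Finset.sum_sub_distrib, hbb O]
            have h1 : ∑ v ∈ O, ∑ T ∈ suppIn W O, coeff W T * cc W f T v
                = ∑ T ∈ suppIn W O, coeff W T := by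
              rw [Finset.sum_comm]
              refine Finset.sum_congr rfl fun T hT => ?_
              rw [← Finset.mul_sum]
              have hT' := mem_suppIn.1 hT
              have : ∑ v ∈ O, cc W f T v = ∑ v ∈ T, cc W f T v := by
                refine (Finset.sum_subset hT'.2 fun v _ hv => ?_).symm
                exact cc_not_mem W f hdist T v hv
              rw [this, cc_sum W f hdist hbb T (mem_supp.2 hT'.1), mul_one]
            rw [h1, sum_coeff_suppIn]
            ring
          -- show ε u = 0
          have hpos : ∀ v ∈ O, 0 < ε v → False := by
            intro v hv hvpos
            have hrest : ∀ w ∈ O.erase v, 0 ≤ ε w := by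
              intro w hw
              have hw' := Finset.mem_erase.1 hw
              by_contra hneg
              push_neg at hneg
              have := hMε v w hv hw'.2 (fun h => hw'.1 h.symm)
              nlinarith
            have : 0 < ∑ v' ∈ O, ε v' := by
              rw [← Finset.add_sum_erase _ _ hv]
              have : 0 ≤ ∑ w ∈ O.erase v, ε w := Finset.sum_nonneg hrest
              linarith
            linarith [hsum]
          have hneg : ∀ v ∈ O, ε v < 0 → False := by
            intro v hv hvneg
            have hrest : ∀ w ∈ O.erase v, ε w ≤ 0 := by
              intro w hw
              have hw' := Finset.mem_erase.1 hw
              by_contra hneg'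
              push_neg at hneg'
              have := hMε v w hv hw'.2 (fun h => hw'.1 h.symm)
              nlinarith
            have : ∑ v' ∈ O, ε v' < 0 := by
              rw [← Finset.add_sum_erase _ _ hv]
              have : ∑ w ∈ O.erase v, ε w ≤ 0 := Finset.sum_nonpos hrest
              linarith
            linarith [hsum]
          have : ε u = 0 := by
            rcases lt_trichotomy (ε u) 0 with h | h | h
            · exact absurd (hneg u huO h) id
            · exact h
            · exact absurd (hpos u huO h) id
          rw [hε] at this
          simp only [] at this
          linarith [this]
        · -- u ∉ O
          rw [hdist u O huO]
          refine (Finset.sum_eq_zero fun T hT => ?_).symm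
          have hT' := mem_suppIn.1 hT
          rw [cc_not_mem W f hdist T u (fun h => huO (hT'.2 h)), mul_zero]
    · -- goodC
      intro hOsupp u
      by_cases huO : u ∈ O
      · by_contra hneg
        push_neg at hneg
        obtain ⟨j, hjO, hjpos⟩ : ∃ j ∈ O, 0 < cc W f O j := by
          by_contra hc
          push_neg at hc
          have : ∑ v ∈ O, cc W f O v ≤ 0 := Finset.sum_nonpos hc
          rw [cc_sum W f hdist hbb O hOsupp] at this
          linarith
        have huj : u ≠ j := by
          intro h
          rw [h] at hneg
          linarith
        have hMuj := keyM W f hdist hbb hPNE O u j huO hjO huj ihS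
        have hq : coeff W O ≠ 0 := mem_supp.1 hOsupp
        have hOin : O ∈ suppIn W O := mem_suppIn.2 ⟨hq, le_rfl⟩
        have hcceq : ∀ v, f v O - ∑ T ∈ (suppIn W O).erase O, coeff W T * cc W f T v
            = coeff W O * cc W f O v := by
          intro v
          have hE : ∑ T' ∈ (suppIn W O).erase O, coeff W T' * cc W f T' v
              = (∑ T' ∈ suppIn W O, coeff W T' * cc W f T' v) - coeff W O * cc W f O v :=
            Finset.sum_erase_eq_sub hOin
          have h : coeff W O * cc W f O v
              = f v O - ∑ T' ∈ (suppIn W O).erase O, coeff W T' * cc W f T' v := by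
            rw [cc_def]; field_simp
          rw [hE] at h ⊢
          linarith
        rw [hcceq u, hcceq j] at hMuj
        have hq2 : 0 < coeff W O * coeff W O := mul_self_pos.2 hq
        have hab : cc W f O u * cc W f O j < 0 := mul_neg_of_neg_of_pos hneg hjpos
        have hprod : (coeff W O * coeff W O) * (cc W f O u * cc W f O j) < 0 :=
          mul_neg_of_pos_of_neg hq2 hab
        have heq : coeff W O * cc W f O u * (coeff W O * cc W f O j)
            = (coeff W O * coeff W O) * (cc W f O u * cc W f O j) := by ring
        rw [heq] at hMuj
        linarith
      · rw [cc_not_mem W f hdist O u huO]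

end MainInduction

-- ### mkWS
noncomputable def mkWS (B : Finset N) (hB : B.Nonempty) (w : N → ℝ)
    (hw : ∀ i ∈ B, 0 < w i) : WeightSystem N where
  lam i := if i ∈ B then w i else 1
  lam_pos i := by
    by_cases h : i ∈ B
    · rw [if_pos h]; exact hw i h
    · rw [if_neg h]; norm_num
  m := if (Finset.univ \ B).Nonempty then 2 else 1
  part k := if k.val = 0 then B else Finset.univ \ B
  part_nonempty k := by
    by_cases h : k.val = 0
    · rw [if_pos h]; exact hB
    · rw [if_neg h]
      by_cases h2 : (Finset.univ \ B).Nonempty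
      · exact h2
      · exfalso
        have hlt := k.isLt
        have he : (if (Finset.univ \ B).Nonempty then 2 else 1) = 1 := if_neg h2
        omega
  part_disjoint k l hne := by
    by_cases hk : k.val = 0 <;> by_cases hl : l.val = 0
    · exact absurd (Fin.ext (hk.trans hl.symm)) hne
    · rw [if_pos hk, if_neg hl]
      exact Finset.sdiff_disjoint.symm
    · rw [if_neg hk, if_pos hl]
      exact Finset.sdiff_disjoint
    · exfalso
      have h1 := k.isLt
      have h2 := l.isLt
      by_cases h3 : (Finset.univ \ B).Nonempty
      · have he : (if (Finset.univ \ B).Nonempty then 2 else 1) = 2 := if_pos h3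
        have heq : k.val = 1 ∧ l.val = 1 := by omega
        exact hne (Fin.ext (heq.1.trans heq.2.symm))
      · have he : (if (Finset.univ \ B).Nonempty then 2 else 1) = 1 := if_neg h3
        omega
  part_covers i := by
    by_cases h : i ∈ B
    · have hm : 0 < if (Finset.univ \ B).Nonempty then 2 else 1 := by split <;> omega
      exact ⟨⟨0, hm⟩, by rw [if_pos rfl]; exact h⟩
    · have hne : (Finset.univ \ B).Nonempty :=
        ⟨i, Finset.mem_sdiff.2 ⟨Finset.mem_univ i, h⟩⟩
      have hm : 1 < if (Finset.univ \ B).Nonempty then 2 else 1 := by rw [if_pos hne]; omega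
      refine ⟨⟨1, hm⟩, ?_⟩
      rw [if_neg (by norm_num)]
      exact Finset.mem_sdiff.2 ⟨Finset.mem_univ i, h⟩

lemma mkWS_idx_zero_iff (B : Finset N) (hB : B.Nonempty) (w : N → ℝ)
    (hw : ∀ i ∈ B, 0 < w i) (i : N) :
    ((mkWS B hB w hw).idx i).val = 0 ↔ i ∈ B := by
  have hmem : i ∈ (mkWS B hB w hw).part ((mkWS B hB w hw).idx i) :=
    ((mkWS B hB w hw).part_covers i).choose_spec
  constructor
  · intro h
    rw [show (mkWS B hB w hw).part ((mkWS B hB w hw).idx i)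
        = if ((mkWS B hB w hw).idx i).val = 0 then B else Finset.univ \ B from rfl,
      if_pos h] at hmem
    exact hmem
  · intro h
    by_contra hne
    rw [show (mkWS B hB w hw).part ((mkWS B hB w hw).idx i)
        = if ((mkWS B hB w hw).idx i).val = 0 then B else Finset.univ \ B from rfl,
      if_neg hne] at hmem
    exact (Finset.mem_sdiff.1 hmem).2 h

lemma mkWS_bar (B : Finset N) (hB : B.Nonempty) (w : N → ℝ)
    (hw : ∀ i ∈ B, 0 < w i) (T : Finset N) (hBT : B ⊆ T) :
    (mkWS B hB w hw).bar T = B := by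
  set ω := mkWS B hB w hw with hω
  ext u
  simp only [WeightSystem.bar, Finset.mem_filter]
  constructor
  · rintro ⟨huT, hmin⟩
    obtain ⟨b, hb⟩ := id hB
    have h1 := hmin b (hBT hb)
    have h2 : (ω.idx b).val = 0 := (mkWS_idx_zero_iff B hB w hw b).2 hb
    have h3 : (ω.idx u).val = 0 := by
      have := Fin.le_def.1 h1
      omega
    exact (mkWS_idx_zero_iff B hB w hw u).1 h3
  · intro huB
    refine ⟨hBT huB, fun v hv => ?_⟩
    have h2 : (ω.idx u).val = 0 := (mkWS_idx_zero_iff B hB w hw u).2 huB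
    rw [Fin.le_def, h2]
    omega


lemma fGWSVbasis_mkWS (B : Finset N) (hB : B.Nonempty) (w : N → ℝ)
    (hw : ∀ i ∈ B, 0 < w i) (T : Finset N) (hBT : B ⊆ T)
    (hsum : ∑ j ∈ B, w j = 1) (i : N) (S : Finset N) :
    fGWSVbasis (mkWS B hB w hw) T i S = if i ∈ B ∧ T ⊆ S then w i else 0 := by
  unfold fGWSVbasis
  rw [mkWS_bar B hB w hw T hBT]
  have hden : ∑ j ∈ B, (mkWS B hB w hw).lam j = 1 := by
    rw [Finset.sum_congr rfl (fun j hj => ?_), hsum]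
    show (if j ∈ B then w j else 1) = w j
    rw [if_pos hj]
  rw [hden]
  by_cases h : i ∈ B ∧ T ⊆ S
  · rw [if_pos h, if_pos h, div_one]
    show (if i ∈ B then w i else 1) = w i
    rw [if_pos h.1]
  · rw [if_neg h, if_neg h]


/-- **Proposition (decomposition).** A budget-balanced distribution rule `f` for
`W = (𝒯, Q)` that guarantees a pure Nash equilibrium in all games in
`G(N, f, W)` decomposes as `f = ∑_{T∈𝒯} q_T · f^T_{GWSV}[ω^T]` for some
sequence of weight systems `{ω^T}_{T∈𝒯}`. -/
theorem decomposition_into_gwsv_basis (N : Type) [Fintype N] [DecidableEq N]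
    (hN : 1 < Fintype.card N)
    (W : Finset N → ℝ) (f : N → Finset N → ℝ)
    (hW0 : W ∅ = 0) (hdist : DistRule f) (hbb : BudgetBalanced W f)
    (hPNE : GuaranteesPNE1 W f) :
    ∃ ωf : Finset N → WeightSystem N,
      ∀ (i : N) (S : Finset N),
        f i S = ∑ T ∈ supp W, coeff W T * fGWSVbasis (ωf T) T i S := by
  classical
  haveI hNne : Nonempty N := Fintype.card_pos_iff.1 (by omega)
  set B : Finset N → Finset N := fun T => T.filter (fun u => cc W f T u ≠ 0) with hBdef
  have main := main_induction W f hW0 hdist hbb hPNE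
  have hgoodS : ∀ (S : Finset N) (u : N),
      f u S = ∑ T ∈ suppIn W S, coeff W T * cc W f T u :=
    fun S u => (main S.card S rfl).1 u
  have hgoodC : ∀ T ∈ supp W, ∀ u, 0 ≤ cc W f T u :=
    fun T hT u => (main T.card T rfl).2 hT u
  have hBsub : ∀ T, B T ⊆ T := fun T => Finset.filter_subset _ _
  have hBne : ∀ T ∈ supp W, (B T).Nonempty := by
    intro T hT
    have hsum := cc_sum W f hdist hbb T hT
    by_contra h
    rw [Finset.not_nonempty_iff_eq_empty] at h
    have hz : ∀ u ∈ T, cc W f T u = 0 := by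
      intro u hu
      by_contra hne
      have hmem : u ∈ B T := Finset.mem_filter.2 ⟨hu, hne⟩
      rw [h] at hmem
      exact absurd hmem (Finset.notMem_empty u)
    rw [Finset.sum_congr rfl hz, Finset.sum_const, smul_zero] at hsum
    norm_num at hsum
  have hw : ∀ T (hT : T ∈ supp W), ∀ u ∈ B T, 0 < cc W f T u := by
    intro T hT u hu
    exact lt_of_le_of_ne (hgoodC T hT u) (Ne.symm (Finset.mem_filter.1 hu).2)
  have hsum1 : ∀ T ∈ supp W, ∑ j ∈ B T, cc W f T j = 1 := by
    intro T hT
    rw [hBdef]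
    simp only []
    rw [Finset.sum_filter_of_ne (fun x hx hne => hne)]
    exact cc_sum W f hdist hbb T hT
  refine ⟨fun T => if h : T ∈ supp W then mkWS (B T) (hBne T h) (cc W f T) (hw T h)
    else mkWS Finset.univ Finset.univ_nonempty (fun _ => 1) (fun _ _ => one_pos), ?_⟩
  intro i S
  rw [hgoodS S i, suppIn, Finset.sum_filter]
  refine Finset.sum_congr rfl fun T hT => ?_
  have hred : (fun T => if h : T ∈ supp W then mkWS (B T) (hBne T h) (cc W f T) (hw T h)
      else mkWS Finset.univ Finset.univ_nonempty (fun _ => 1) (fun _ _ => one_pos)) T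
      = mkWS (B T) (hBne T hT) (cc W f T) (hw T hT) := dif_pos hT
  rw [hred,
    fGWSVbasis_mkWS (B T) (hBne T hT) (cc W f T) (hw T hT) T (hBsub T) (hsum1 T hT) i S]
  by_cases h1 : T ⊆ S
  · rw [if_pos h1]
    by_cases h2 : i ∈ B T
    · rw [if_pos ⟨h2, h1⟩]
    · rw [if_neg (fun hh => h2 hh.1)]
      have hz : cc W f T i = 0 := by
        by_cases h3 : i ∈ T
        · by_contra hne
          exact h2 (Finset.mem_filter.2 ⟨h3, hne⟩)
        · exact cc_not_mem W f hdist T i h3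
      rw [hz, mul_zero]
  · rw [if_neg h1, if_neg (fun hh => h1 hh.2), mul_zero]


end CostSharing
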